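/- Let ω, ω_X, ω_C, γ, g be real numbers with γ ≠ 0, g < 0, ω > max(ω_X, ω_C), and 0 < ϖ_X·ϖ_C < γ² (band 2.2). Then there exist functions φ_X, φ_C : ℝ → ℝ, with φ_X continuously differentiable and φ_C twice continuously differentiable, satisfying the stationary polariton envelope equations at every x ∈ ℝ, such that φ_X and φ_C are even and bounded, φ_X(x) → 0 and φ_C(x) → 0 as x → +∞ and as x → −∞, and the supremum over x ∈ ℝ of |g|·φ_X(x)² is attained and equals −ϖ_X + (γ²/ϖ_C)·(3/4 + √(9/16 − ϖ_X·ϖ_C/(2γ²))). -/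

import Mathlib

open Filter

private noncomputable def Pf (B G u₀ lam : ℝ) (p : ℝ) : ℝ :=
  2*B*G*((u₀-p^2)^2*((2*u₀-p^2)*(G*(u₀-p^2)^2+lam)))

private noncomputable def Pd (B G u₀ lam : ℝ) (p : ℝ) : ℝ :=
  -4*p*B*G*(2*(u₀-p^2)*(2*u₀-p^2)*(G*(u₀-p^2)^2+lam)
    + (u₀-p^2)^2*(G*(u₀-p^2)^2+lam) + 2*G*(u₀-p^2)^3*(2*u₀-p^2))

private noncomputable def If' (A B G u₀ lam : ℝ) (s : ℝ) : ℝ :=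
  2*(A+3*G*(u₀-s^2)^2)/Real.sqrt (Pf B G u₀ lam s)

private noncomputable def Sf (A B G u₀ lam : ℝ) (p : ℝ) : ℝ :=
  ∫ s in (0:ℝ)..p, If' A B G u₀ lam s

private lemma Pf_hasDerivAt (B G u₀ lam p : ℝ) :
    HasDerivAt (Pf B G u₀ lam) (Pd B G u₀ lam p) p := by
  have hX : HasDerivAt (fun q : ℝ => u₀ - q^2) (-(2*p)) p := by
    have := (hasDerivAt_pow 2 p).const_sub u₀
    refine this.congr_deriv ?_ ; push_cast ; ring
  have hX2 : HasDerivAt (fun q : ℝ => (u₀ - q^2)^2) (2*(u₀-p^2)*(-(2*p))) p := by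
    have := hX.pow 2
    refine this.congr_deriv ?_ ; push_cast ; ring
  have hY : HasDerivAt (fun q : ℝ => 2*u₀ - q^2) (-(2*p)) p := by
    have := (hasDerivAt_pow 2 p).const_sub (2*u₀)
    refine this.congr_deriv ?_ ; push_cast ; ring
  have hZ : HasDerivAt (fun q : ℝ => G*(u₀-q^2)^2 + lam) (G*(2*(u₀-p^2)*(-(2*p)))) p :=
    (hX2.const_mul G).add_const lam
  have h := (hX2.mul (hY.mul hZ)).const_mul (2*B*G)
  refine h.congr_deriv ?_
  simp only [Pd, Pi.mul_apply]
  ring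

private lemma Pf_cont (B G u₀ lam : ℝ) : Continuous (Pf B G u₀ lam) := by
  unfold Pf ; fun_prop

private lemma Pf_even (B G u₀ lam p : ℝ) : Pf B G u₀ lam (-p) = Pf B G u₀ lam p := by
  unfold Pf ; ring

private lemma Pf_pos {B G u₀ lam : ℝ} (hB : 0 < B) (hG : 0 < G) (hlam : 0 < lam)
    {p : ℝ} (hp : p^2 < u₀) : 0 < Pf B G u₀ lam p := by
  have h1 : 0 < u₀ - p^2 := by linarith
  have h2 : 0 < 2*u₀ - p^2 := by nlinarith [sq_nonneg p]
  have h3 : 0 < G*(u₀-p^2)^2 + lam := by positivity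
  unfold Pf
  positivity

private lemma If'_even (A B G u₀ lam s : ℝ) : If' A B G u₀ lam (-s) = If' A B G u₀ lam s := by
  unfold If'
  rw [Pf_even]
  norm_num

private lemma If'_contOn {A B G u₀ lam : ℝ} (hB : 0 < B) (hG : 0 < G) (hlam : 0 < lam) :
    ContinuousOn (If' A B G u₀ lam) {s : ℝ | s^2 < u₀} := by
  apply ContinuousOn.div
  · fun_prop
  · exact (Real.continuous_sqrt.comp (Pf_cont B G u₀ lam)).continuousOn
  · intro s hs
    exact (Real.sqrt_pos.mpr (Pf_pos hB hG hlam hs)).ne'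

private lemma If'_pos {A B G u₀ lam : ℝ} (hA : 0 < A) (hB : 0 < B) (hG : 0 < G)
    (hlam : 0 < lam) {p : ℝ} (hp : p^2 < u₀) : 0 < If' A B G u₀ lam p := by
  unfold If'
  have h1 : 0 < A + 3*G*(u₀-p^2)^2 := by positivity
  have h2 := Real.sqrt_pos.mpr (Pf_pos hB hG hlam hp)
  positivity

private lemma setU_open (u₀ : ℝ) : IsOpen {s : ℝ | s^2 < u₀} :=
  isOpen_lt (by fun_prop) continuous_const

private lemma Sf_hasDerivAt {A B G u₀ lam : ℝ} (hB : 0 < B) (hG : 0 < G) (hlam : 0 < lam)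
    {p : ℝ} (hp : p^2 < u₀) : HasDerivAt (Sf A B G u₀ lam) (If' A B G u₀ lam p) p := by
  have hU : IsOpen {s : ℝ | s^2 < u₀} := setU_open u₀
  have hsub : Set.uIcc 0 p ⊆ {s : ℝ | s^2 < u₀} := by
    intro s hs
    rcases Set.mem_uIcc.mp hs with ⟨h1,h2⟩|⟨h1,h2⟩ <;> simp only [Set.mem_setOf_eq] <;> nlinarith
  exact intervalIntegral.integral_hasDerivAt_right
    (((If'_contOn hB hG hlam).mono hsub).intervalIntegrable)
    (ContinuousOn.stronglyMeasurableAtFilter hU (If'_contOn hB hG hlam) _ hp)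
    ((If'_contOn hB hG hlam).continuousAt (hU.mem_nhds hp))

private lemma Sf_odd (A B G u₀ lam p : ℝ) : Sf A B G u₀ lam (-p) = - Sf A B G u₀ lam p := by
  unfold Sf
  calc (∫ s in (0:ℝ)..(-p), If' A B G u₀ lam s)
      = ∫ s in (-0:ℝ)..(-p), If' A B G u₀ lam s := by norm_num
    _ = ∫ s in p..(0:ℝ), If' A B G u₀ lam (-s) := (intervalIntegral.integral_comp_neg _).symm
    _ = ∫ s in p..(0:ℝ), If' A B G u₀ lam s :=
        intervalIntegral.integral_congr (fun s _ => If'_even A B G u₀ lam s)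
    _ = - ∫ s in (0:ℝ)..p, If' A B G u₀ lam s := intervalIntegral.integral_symm 0 p

private lemma star_id {A B G D ρ₀ lam u₀ : ℝ} (h3 : B*ρ₀*lam = D*A)
    (h4 : 2*B*(ρ₀-lam) = 3*D-A*B) (hu₀sq : G*u₀^2 = ρ₀) (p : ℝ) :
    2*Pf B G u₀ lam p + p*Pd B G u₀ lam p
      = -8*(D*(u₀-p^2) - B*G*(u₀-p^2)^3)*(A+3*G*(u₀-p^2)^2) := by
  have e1 : D*A = B*(G*u₀^2)*lam := by rw [hu₀sq] ; linarith
  have e2 : 3*D-A*B = 2*B*((G*u₀^2)-lam) := by rw [hu₀sq] ; linarith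
  simp only [Pf, Pd]
  linear_combination (8*(u₀-p^2)) * e1 + (8*G*(u₀-p^2)^3) * e2

private lemma c2_value (A B G γ ρ₀ lam u₀ W s : ℝ) (hγ : γ ≠ 0)
    (h3 : B*ρ₀*lam = (γ^2 - A*B)*A) (h4 : 2*B*(ρ₀-lam) = 3*(γ^2 - A*B)-A*B)
    (hu₀sq : G*u₀^2 = ρ₀)
    (hs2 : s^2 = Pf B G u₀ lam W) (hspos : 0 < s)
    (hden : 0 < A+3*G*(u₀-W^2)^2) :
    -( (s/(2*(A+3*G*(u₀-W^2)^2))) * s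
        + W * (Pd B G u₀ lam W * (s/(2*(A+3*G*(u₀-W^2)^2))) / (2*s)) ) / γ
      = (2/γ) * ((γ^2-A*B) * (u₀-W^2) - B*G*(u₀-W^2)^3) := by
  have hstar := star_id h3 h4 hu₀sq W
  rw [← hs2] at hstar
  have e1 : (s/(2*(A+3*G*(u₀-W^2)^2))) * s
        + W * (Pd B G u₀ lam W * (s/(2*(A+3*G*(u₀-W^2)^2))) / (2*s))
      = (2*s^2 + W * Pd B G u₀ lam W)/(4*(A+3*G*(u₀-W^2)^2)) := by
    field_simp
    ring
  rw [e1, hstar]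
  field_simp
  rw [mul_div_assoc, div_self (ne_of_gt (by linarith : (0:ℝ) < A + (u₀ - W ^ 2) ^ 2 * G * 3))] ; ring
open Filter in
set_option maxHeartbeats 1000000 in
private theorem bright_aux (A B G γ ρ₀ lam u₀ a : ℝ)
    (hA : 0 < A) (hB : 0 < B) (hG : 0 < G) (hγ : γ ≠ 0)
    (hρ : 0 < ρ₀) (hlam : 0 < lam)
    (h3 : B*ρ₀*lam = (γ^2 - A*B)*A) (h4 : 2*B*(ρ₀-lam) = 3*(γ^2 - A*B)-A*B)
    (hu₀sq : G*u₀^2 = ρ₀) (hu₀ : 0 < u₀)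
    (ha2 : a^2 = u₀) (ha : 0 < a) :
    ∃ φX φC : ℝ → ℝ,
      ContDiff ℝ 1 φX ∧ ContDiff ℝ 2 φC ∧
      (∀ x : ℝ, (-G * φX x ^ 2 - A) * φX x + γ * φC x = 0) ∧
      (∀ x : ℝ, -(1/2) * deriv (deriv φC) x - B * φC x + γ * φX x = 0) ∧
      (∀ x : ℝ, φX (-x) = φX x) ∧ (∀ x : ℝ, φC (-x) = φC x) ∧
      (∃ M : ℝ, ∀ x : ℝ, |φX x| ≤ M) ∧ (∃ M : ℝ, ∀ x : ℝ, |φC x| ≤ M) ∧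
      Tendsto φX atTop (nhds 0) ∧ Tendsto φX atBot (nhds 0) ∧
      Tendsto φC atTop (nhds 0) ∧ Tendsto φC atBot (nhds 0) ∧
      (∃ x₀ : ℝ, (∀ x : ℝ, G * φX x ^ 2 ≤ G * φX x₀ ^ 2) ∧ G * φX x₀ ^ 2 = ρ₀) := by
  have hπ := Real.pi_pos
  -- the auxiliary reparametrization θ
  set θ : ℝ → ℝ := fun z => (2*a/Real.pi) * Real.arctan z with hθdef
  have hθd : ∀ z, HasDerivAt θ ((2*a/Real.pi) * (1/(1+z^2))) z :=
    fun z => (Real.hasDerivAt_arctan z).const_mul _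
  have hθd_pos : ∀ z : ℝ, 0 < (2*a/Real.pi) * (1/(1+z^2)) := by
    intro z ; positivity
  have hθlt : ∀ z, |θ z| < a := by
    intro z
    have h1 : |Real.arctan z| < Real.pi/2 := by
      rw [abs_lt]
      exact ⟨Real.neg_pi_div_two_lt_arctan z, Real.arctan_lt_pi_div_two z⟩
    have h2 : |θ z| = (2*a/Real.pi) * |Real.arctan z| := by
      rw [hθdef] ; rw [abs_mul, abs_of_pos (by positivity)]
    rw [h2]
    calc (2*a/Real.pi) * |Real.arctan z| < (2*a/Real.pi) * (Real.pi/2) :=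
          mul_lt_mul_of_pos_left h1 (by positivity)
      _ = a := by field_simp
  have hθU : ∀ z, (θ z)^2 < u₀ := by
    intro z
    nlinarith [hθlt z, abs_nonneg (θ z), sq_abs (θ z)]
  have hθodd : ∀ z, θ (-z) = - θ z := by
    intro z ; rw [hθdef] ; simp only [Real.arctan_neg] ; ring
  -- the function F = S ∘ θ
  set S : ℝ → ℝ := Sf A B G u₀ lam with hSdef
  set F : ℝ → ℝ := fun z => S (θ z) with hFdef
  have hFd : ∀ z, HasDerivAt F (If' A B G u₀ lam (θ z) * ((2*a/Real.pi) * (1/(1+z^2)))) z :=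
    fun z => (Sf_hasDerivAt (A:=A) hB hG hlam (hθU z)).comp z (hθd z)
  have hFderiv_pos : ∀ z, 0 < If' A B G u₀ lam (θ z) * ((2*a/Real.pi) * (1/(1+z^2))) :=
    fun z => mul_pos (If'_pos hA hB hG hlam (hθU z)) (hθd_pos z)
  have hFmono : StrictMono F :=
    strictMono_of_deriv_pos (fun z => by rw [(hFd z).deriv] ; exact hFderiv_pos z)
  have hFdiff : Differentiable ℝ F := fun z => (hFd z).differentiableAt
  have hFcont : Continuous F := hFdiff.continuous
  have hFodd : ∀ z, F (-z) = - F z := by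
    intro z
    rw [hFdef] ; simp only
    rw [hθodd]
    exact Sf_odd A B G u₀ lam (θ z)
  -- lower bound for S, to prove F → ∞
  set K : ℝ := Real.sqrt (4*B*G*u₀*(G*u₀^2+lam)) with hKdef
  have hKpos : 0 < K := Real.sqrt_pos.mpr (by positivity)
  have hKsq : K^2 = 4*B*G*u₀*(G*u₀^2+lam) := Real.sq_sqrt (by positivity)
  set Cst : ℝ := A/(K*a) with hCdef
  have hCpos : 0 < Cst := by rw [hCdef] ; positivity
  have hIlb : ∀ q : ℝ, 0 ≤ q → q < a → Cst/(a-q) ≤ If' A B G u₀ lam q := by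
    intro q hq0 hqa
    have hq2 : q^2 < u₀ := by nlinarith
    have ht : 0 < u₀ - q^2 := by linarith
    have ht2 : u₀ - q^2 ≤ u₀ := by nlinarith
    have hPle : Pf B G u₀ lam q ≤ (K*(u₀-q^2))^2 := by
      have key : (2*u₀-q^2)*(G*(u₀-q^2)^2+lam) ≤ (2*u₀)*(G*u₀^2+lam) := by
        have hZpos : 0 < G*(u₀-q^2)^2+lam := by positivity
        have k1 : 0 ≤ q^2*(G*(u₀-q^2)^2+lam) := by positivity
        have k2 : 0 ≤ (2*u₀)*((G*u₀^2+lam)-(G*(u₀-q^2)^2+lam)) := by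
          apply mul_nonneg (by linarith)
          have h2u : (0:ℝ) ≤ 2*u₀ - q^2 := by nlinarith
          have hx : 0 ≤ G*(q^2*(2*u₀ - q^2)) := by positivity
          nlinarith [hx]
        nlinarith [k1, k2]
      calc Pf B G u₀ lam q
          = 2*B*G*((u₀-q^2)^2*((2*u₀-q^2)*(G*(u₀-q^2)^2+lam))) := rfl
        _ ≤ 2*B*G*((u₀-q^2)^2*((2*u₀)*(G*u₀^2+lam))) := by
            apply mul_le_mul_of_nonneg_left _ (by positivity)
            exact mul_le_mul_of_nonneg_left key (sq_nonneg _)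
        _ = (K*(u₀-q^2))^2 := by rw [mul_pow, hKsq] ; ring
    have hsqrtle : Real.sqrt (Pf B G u₀ lam q) ≤ K*(u₀-q^2) := by
      have h := Real.sqrt_le_sqrt hPle
      rwa [Real.sqrt_sq (by positivity)] at h
    have hsqrtpos : 0 < Real.sqrt (Pf B G u₀ lam q) :=
      Real.sqrt_pos.mpr (Pf_pos hB hG hlam hq2)
    have step1 : 2*A/(K*(u₀-q^2)) ≤ If' A B G u₀ lam q := by
      unfold If'
      have h0 : 0 ≤ 3*G*(u₀-q^2)^2 := by positivity
      exact div_le_div₀ (by positivity) (by linarith) hsqrtpos hsqrtle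
    have step2 : Cst/(a-q) ≤ 2*A/(K*(u₀-q^2)) := by
      have haq : 0 < a - q := by linarith
      have h2a : u₀ - q^2 ≤ 2*a*(a-q) := by nlinarith
      have e : Cst/(a-q) = 2*A/(2*(K*a*(a-q))) := by
        rw [hCdef]
        rw [div_div]
        rw [eq_div_iff (by positivity)]
        field_simp
      rw [e]
      apply div_le_div₀ (by positivity) (le_refl (2*A)) (by positivity)
      nlinarith [mul_le_mul_of_nonneg_left h2a hKpos.le]
    exact le_trans step2 step1
  have hSlb : ∀ p : ℝ, 0 ≤ p → p^2 < u₀ → Cst*(Real.log a - Real.log (a-p)) ≤ S p := by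
    intro p hp0 hpU
    have hpa : p < a := by nlinarith
    set Λ : ℝ → ℝ := fun q => Cst*(Real.log a - Real.log (a - q)) with hΛdef
    have hΛd : ∀ q : ℝ, q < a → HasDerivAt Λ (Cst*(a-q)⁻¹) q := by
      intro q hq
      have h1 : HasDerivAt (fun q : ℝ => a - q) (-1) q := (hasDerivAt_id q).const_sub a
      have h2 : HasDerivAt (fun q : ℝ => Real.log (a-q)) ((a-q)⁻¹ * (-1)) q :=
        (Real.hasDerivAt_log (sub_pos.mpr hq).ne').comp q h1
      have h3 := (h2.const_sub (Real.log a)).const_mul Cst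
      refine h3.congr_deriv ?_
      ring
    have hmemU : ∀ q : ℝ, q ∈ Set.Icc 0 p → q^2 < u₀ := by
      intro q hq ; obtain ⟨l1, l2⟩ := hq ; nlinarith
    have hmema : ∀ q : ℝ, q ∈ Set.Icc 0 p → q < a := by
      intro q hq ; obtain ⟨l1, l2⟩ := hq ; nlinarith
    have keymono : MonotoneOn (fun q => S q - Λ q) (Set.Icc 0 p) := by
      apply monotoneOn_of_deriv_nonneg (convex_Icc 0 p)
      · intro q hq
        exact ((Sf_hasDerivAt (A:=A) hB hG hlam (hmemU q hq)).sub
          (hΛd q (hmema q hq))).continuousAt.continuousWithinAt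
      · intro q hq
        rw [interior_Icc] at hq
        exact ((Sf_hasDerivAt (A:=A) hB hG hlam (hmemU q (Set.mem_Icc_of_Ioo hq))).sub
          (hΛd q (hmema q (Set.mem_Icc_of_Ioo hq)))).differentiableAt.differentiableWithinAt
      · intro q hq
        rw [interior_Icc] at hq
        have hq' := Set.mem_Icc_of_Ioo hq
        have hd := (Sf_hasDerivAt (A:=A) hB hG hlam (hmemU q hq')).sub (hΛd q (hmema q hq'))
        change 0 ≤ deriv (Sf A B G u₀ lam - Λ) q ; rw [hd.deriv]
        have hlb := hIlb q hq'.1 (hmema q hq')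
        rw [div_eq_mul_inv] at hlb
        linarith
    have h0mem : (0:ℝ) ∈ Set.Icc 0 p := ⟨le_refl 0, hp0⟩
    have hpmem : p ∈ Set.Icc 0 p := ⟨hp0, le_refl p⟩
    have hmono := keymono h0mem hpmem hp0
    have hS0 : S 0 = 0 := intervalIntegral.integral_same
    have hΛ0 : Λ 0 = 0 := by rw [hΛdef] ; simp
    simp only [hΛdef] at hmono
    rw [hS0] at hmono
    simp only [sub_zero, sub_self, mul_zero, zero_sub] at hmono
    linarith
  -- F tends to infinity
  have hθtop : Tendsto (fun z => a - θ z) atTop (nhdsWithin 0 (Set.Ioi 0)) := by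
    rw [tendsto_nhdsWithin_iff]
    constructor
    · have h1 : Tendsto Real.arctan atTop (nhds (Real.pi/2)) :=
        Real.tendsto_arctan_atTop.mono_right nhdsWithin_le_nhds
      have h2 : Tendsto (fun z => a - (2*a/Real.pi) * Real.arctan z) atTop
          (nhds (a - (2*a/Real.pi)*(Real.pi/2))) := (h1.const_mul _).const_sub a
      have h0 : a - (2*a/Real.pi)*(Real.pi/2) = 0 := by field_simp ; ring
      rw [h0] at h2
      exact h2
    · refine Filter.Eventually.of_forall (fun z => ?_)
      have := abs_lt.mp (hθlt z)
      simp only [Set.mem_Ioi]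
      linarith [this.2]
  have hlogbot : Tendsto (fun z => Real.log (a - θ z)) atTop atBot :=
    Real.tendsto_log_nhdsGT_zero.comp hθtop
  have hΛtop : Tendsto (fun z => Cst*(Real.log a - Real.log (a - θ z))) atTop atTop := by
    apply Filter.Tendsto.const_mul_atTop hCpos
    simp only [sub_eq_add_neg]
    apply tendsto_atTop_add_const_left
    exact tendsto_neg_atBot_atTop.comp hlogbot
  have hFtop : Tendsto F atTop atTop := by
    apply tendsto_atTop_mono' atTop ?_ hΛtop
    filter_upwards [eventually_ge_atTop (0:ℝ)] with z hz
    have hθ0 : 0 ≤ θ z := by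
      rw [hθdef]
      have h1 : Real.arctan 0 ≤ Real.arctan z := Real.arctan_strictMono.monotone hz
      rw [Real.arctan_zero] at h1
      positivity
    exact hSlb (θ z) hθ0 (hθU z)
  have hFbot : Tendsto F atBot atBot := by
    have hcomp : (fun z : ℝ => -F (-z)) = F := by
      funext t
      have := hFodd (-t)
      rw [neg_neg] at this
      linarith
    rw [← hcomp]
    exact tendsto_neg_atTop_atBot.comp (hFtop.comp tendsto_neg_atBot_atTop)
  have hFsurj : Function.Surjective F := hFcont.surjective hFtop hFbot
  -- the inverse function z and the soliton profile functions
  set z : ℝ → ℝ := fun x => (StrictMono.orderIsoOfSurjective F hFmono hFsurj).symm x with hzdef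
  have hez : ∀ x, F (z x) = x :=
    fun x => StrictMono.orderIsoOfSurjective_self_symm_apply F hFmono hFsurj x
  have hzF : ∀ y, z (F y) = y :=
    fun y => StrictMono.orderIsoOfSurjective_symm_apply_self F hFmono hFsurj y
  have hzcont : Continuous z := OrderIso.continuous _
  have hzd : ∀ x, HasDerivAt z
      (If' A B G u₀ lam (θ (z x)) * ((2*a/Real.pi) * (1/(1+(z x)^2))))⁻¹ x :=
    fun x => HasDerivAt.of_local_left_inverse hzcont.continuousAt (hFd (z x))
      (hFderiv_pos (z x)).ne' (Filter.Eventually.of_forall hez)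
  set w : ℝ → ℝ := fun x => θ (z x) with hwdef
  have hw2 : ∀ x, (w x)^2 < u₀ := fun x => hθU (z x)
  set Φ : ℝ → ℝ := fun p => Real.sqrt (Pf B G u₀ lam p) / (2*(A+3*G*(u₀-p^2)^2)) with hΦdef
  have hwd : ∀ x, HasDerivAt w (Φ (w x)) x := by
    intro x
    have h := (hθd (z x)).comp x (hzd x)
    have hIv := If'_pos hA hB hG hlam (hw2 x)
    have hc : 0 < (2*a/Real.pi) * (1/(1+(z x)^2)) := hθd_pos (z x)
    have heq : (2*a/Real.pi) * (1/(1+(z x)^2)) *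
        (If' A B G u₀ lam (θ (z x)) * ((2*a/Real.pi) * (1/(1+(z x)^2))))⁻¹ = Φ (w x) := by
      have h1 : (2*a/Real.pi) * (1/(1+(z x)^2)) *
          (If' A B G u₀ lam (θ (z x)) * ((2*a/Real.pi) * (1/(1+(z x)^2))))⁻¹
          = (If' A B G u₀ lam (w x))⁻¹ := by
        rw [show θ (z x) = w x from rfl]
        field_simp
      rw [h1, hΦdef]
      simp only [If', inv_div]
    exact heq ▸ h
  set u : ℝ → ℝ := fun x => u₀ - (w x)^2 with hudef
  have hupos : ∀ x, 0 < u x := fun x => by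
    have := hw2 x ; simp only [hudef] ; linarith
  have hule : ∀ x, u x ≤ u₀ := fun x => by
    simp only [hudef] ; nlinarith [sq_nonneg (w x)]
  have hud : ∀ x, HasDerivAt u (-(2*(w x)*Φ (w x))) x := by
    intro x
    have h := ((hwd x).pow 2).const_sub u₀
    refine h.congr_deriv ?_
    push_cast
    ring
  have hwcont : Continuous w := by
    rw [hwdef, hθdef]
    exact continuous_const.mul (Real.continuous_arctan.comp hzcont)
  have hΦcont : Continuous Φ := by
    rw [hΦdef]
    apply Continuous.div (Real.continuous_sqrt.comp (Pf_cont B G u₀ lam)) (by fun_prop)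
    intro p
    have hd : 0 < A+3*G*(u₀-p^2)^2 := by positivity
    positivity
  have hucont : Continuous u := by
    rw [hudef] ; exact continuous_const.sub (hwcont.pow 2)
  -- φX regularity
  have hφX : ContDiff ℝ 1 u := by
    rw [contDiff_one_iff_deriv]
    constructor
    · exact fun x => (hud x).differentiableAt
    · have hde : deriv u = fun x => -(2*(w x)*Φ (w x)) := funext fun x => (hud x).deriv
      rw [hde]
      exact ((continuous_const.mul hwcont).mul (hΦcont.comp hwcont)).neg
  -- φC and its derivatives
  set c : ℝ → ℝ := fun x => (A * u x + G * u x^3)/γ with hcdef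
  have hccont : Continuous c := by
    rw [hcdef]
    exact ((continuous_const.mul hucont).add (continuous_const.mul (hucont.pow 3))).div_const γ
  have hc1d : ∀ x, HasDerivAt c (-(w x * Real.sqrt (Pf B G u₀ lam (w x)))/γ) x := by
    intro x
    have h2 := (((hud x).const_mul A).add (((hud x).pow 3).const_mul G)).div_const γ
    refine h2.congr_deriv ?_
    have hden : (0:ℝ) < A+3*G*(u₀-(w x)^2)^2 := by positivity
    simp only [hΦdef, hudef]
    push_cast
    field_simp
    ring
  set c1 : ℝ → ℝ := fun x => -(w x * Real.sqrt (Pf B G u₀ lam (w x)))/γ with hc1def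
  have hc2d : ∀ x, HasDerivAt c1 ((2/γ) * ((γ^2 - A*B) * u x - B*G*(u x)^3)) x := by
    intro x
    have hPpos := Pf_pos hB hG hlam (hw2 x)
    have hcomp : HasDerivAt (fun y => Pf B G u₀ lam (w y)) (Pd B G u₀ lam (w x) * Φ (w x)) x :=
      (Pf_hasDerivAt B G u₀ lam (w x)).comp x (hwd x)
    have hsq : HasDerivAt (fun y => Real.sqrt (Pf B G u₀ lam (w y)))
        (Pd B G u₀ lam (w x) * Φ (w x) / (2*Real.sqrt (Pf B G u₀ lam (w x)))) x :=
      hcomp.sqrt hPpos.ne'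
    have hprod := (((hwd x).mul hsq).neg).div_const γ
    refine hprod.congr_deriv ?_
    have hsqrtpos : 0 < Real.sqrt (Pf B G u₀ lam (w x)) := Real.sqrt_pos.mpr hPpos
    have hden : (0:ℝ) < A+3*G*(u₀-(w x)^2)^2 := by positivity
    exact (c2_value A B G γ ρ₀ lam u₀ (w x) (Real.sqrt (Pf B G u₀ lam (w x))) hγ h3 h4 hu₀sq
      (Real.sq_sqrt hPpos.le) hsqrtpos hden)
  have hderiv_c : deriv c = c1 := funext fun x => (hc1d x).deriv
  have hc1cont : Continuous c1 := by
    rw [hc1def]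
    exact (((hwcont.mul ((Real.continuous_sqrt.comp (Pf_cont B G u₀ lam)).comp hwcont))).neg).div_const γ
  have hc2cont : Continuous (fun x => (2/γ) * ((γ^2 - A*B) * u x - B*G*(u x)^3)) :=
    continuous_const.mul ((continuous_const.mul hucont).sub (continuous_const.mul (hucont.pow 3)))
  have hφC : ContDiff ℝ 2 c := by
    rw [show (2 : WithTop ℕ∞) = 1 + 1 from by norm_num, contDiff_succ_iff_deriv]
    refine ⟨fun x => (hc1d x).differentiableAt, by simp, ?_⟩
    rw [hderiv_c, contDiff_one_iff_deriv]
    refine ⟨fun x => (hc2d x).differentiableAt, ?_⟩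
    have hde : deriv c1 = fun x => (2/γ) * ((γ^2 - A*B) * u x - B*G*(u x)^3) :=
      funext fun x => (hc2d x).deriv
    rw [hde]
    exact hc2cont
  -- the two envelope equations
  have heq1 : ∀ x : ℝ, (-G * u x ^ 2 - A) * u x + γ * c x = 0 := by
    intro x
    rw [hcdef]
    field_simp
    ring
  have heq2 : ∀ x : ℝ, -(1/2) * deriv (deriv c) x - B * c x + γ * u x = 0 := by
    intro x
    have hd2 : deriv (deriv c) x = (2/γ) * ((γ^2 - A*B) * u x - B*G*(u x)^3) := by
      rw [hderiv_c] ; exact (hc2d x).deriv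
    rw [hd2, hcdef]
    field_simp
    ring
  -- evenness
  have hzodd : ∀ x, z (-x) = - z x := by
    intro x
    have h1 : F (z (-x)) = -x := hez (-x)
    have h2 : F (-z x) = -x := by rw [hFodd, hez]
    exact hFmono.injective (h1.trans h2.symm)
  have hwodd : ∀ x, w (-x) = - w x := by
    intro x
    rw [hwdef] ; simp only
    rw [hzodd, hθodd]
  have hueven : ∀ x, u (-x) = u x := by
    intro x
    simp only [hudef]
    rw [hwodd] ; ring
  have hceven : ∀ x, c (-x) = c x := by
    intro x
    rw [hcdef] ; simp only
    rw [hueven]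
  -- bounds
  have hXbd : ∀ x : ℝ, |u x| ≤ u₀ := by
    intro x
    rw [abs_of_pos (hupos x)] ; exact hule x
  have hCbd : ∀ x : ℝ, |c x| ≤ (A*u₀+G*u₀^3)/|γ| := by
    intro x
    have h1 : 0 ≤ A*u x + G*u x^3 := by
      have := hupos x ; have h3 := pow_pos (hupos x) 3 ; positivity
    have h2 : A*u x + G*u x^3 ≤ A*u₀+G*u₀^3 := by
      have := hule x ; have := hupos x
      have h3 : u x^3 ≤ u₀^3 := pow_le_pow_left₀ (hupos x).le (hule x) 3
      nlinarith
    rw [hcdef] ; simp only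
    rw [abs_div, abs_of_nonneg h1]
    exact (div_le_div_iff_of_pos_right (abs_pos.mpr hγ)).mpr h2
  -- limits at infinity
  have hztop : Tendsto z atTop atTop := by
    rw [tendsto_atTop_atTop]
    intro b
    refine ⟨F b, fun x hx => ?_⟩
    have h := (StrictMono.orderIsoOfSurjective F hFmono hFsurj).symm.monotone hx
    calc b = z (F b) := (hzF b).symm
      _ ≤ z x := h
  have hzbot : Tendsto z atBot atBot := by
    rw [tendsto_atBot_atBot]
    intro b
    refine ⟨F b, fun x hx => ?_⟩
    have h := (StrictMono.orderIsoOfSurjective F hFmono hFsurj).symm.monotone hx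
    calc z x ≤ z (F b) := h
      _ = b := hzF b
  have hwtop : Tendsto w atTop (nhds a) := by
    have h1 : Tendsto Real.arctan atTop (nhds (Real.pi/2)) :=
      Real.tendsto_arctan_atTop.mono_right nhdsWithin_le_nhds
    have h2 : Tendsto w atTop (nhds ((2*a/Real.pi)*(Real.pi/2))) :=
      (h1.comp hztop).const_mul _
    have h0 : (2*a/Real.pi)*(Real.pi/2) = a := by field_simp
    rwa [h0] at h2
  have hwbot : Tendsto w atBot (nhds (-a)) := by
    have h1 : Tendsto Real.arctan atBot (nhds (-(Real.pi/2))) :=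
      Real.tendsto_arctan_atBot.mono_right nhdsWithin_le_nhds
    have h2 : Tendsto w atBot (nhds ((2*a/Real.pi)*(-(Real.pi/2)))) :=
      (h1.comp hzbot).const_mul _
    have h0 : (2*a/Real.pi)*(-(Real.pi/2)) = -a := by field_simp
    rwa [h0] at h2
  have hXtop : Tendsto u atTop (nhds 0) := by
    have h2 : Tendsto u atTop (nhds (u₀ - a^2)) := tendsto_const_nhds.sub (hwtop.pow 2)
    have h0 : u₀ - a^2 = 0 := by rw [ha2] ; ring
    rwa [h0] at h2
  have hXbot : Tendsto u atBot (nhds 0) := by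
    have h2 : Tendsto u atBot (nhds (u₀ - (-a)^2)) := tendsto_const_nhds.sub (hwbot.pow 2)
    have h0 : u₀ - (-a)^2 = 0 := by rw [neg_sq, ha2] ; ring
    rwa [h0] at h2
  have hCtop : Tendsto c atTop (nhds 0) := by
    have h2 : Tendsto c atTop (nhds ((A*0+G*0^3)/γ)) :=
      ((hXtop.const_mul A).add ((hXtop.pow 3).const_mul G)).div_const γ
    have h0 : (A*(0:ℝ)+G*0^3)/γ = 0 := by norm_num
    rwa [h0] at h2
  have hCbot : Tendsto c atBot (nhds 0) := by
    have h2 : Tendsto c atBot (nhds ((A*0+G*0^3)/γ)) :=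
      ((hXbot.const_mul A).add ((hXbot.pow 3).const_mul G)).div_const γ
    have h0 : (A*(0:ℝ)+G*0^3)/γ = 0 := by norm_num
    rwa [h0] at h2
  -- the peak
  have hF0 : F 0 = 0 := by
    rw [hFdef] ; simp only
    have hθ0 : θ 0 = 0 := by rw [hθdef] ; simp [Real.arctan_zero]
    rw [hθ0]
    exact intervalIntegral.integral_same
  have hz0 : z 0 = 0 := by
    calc z 0 = z (F 0) := by rw [hF0]
      _ = 0 := hzF 0
  have hw0 : w 0 = 0 := by
    rw [hwdef] ; simp only
    rw [hz0, hθdef] ; simp [Real.arctan_zero]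
  have hu0 : u 0 = u₀ := by
    simp only [hudef] ; rw [hw0] ; ring
  have hpeak : ∀ x : ℝ, G * u x ^ 2 ≤ G * u 0 ^ 2 := by
    intro x
    rw [hu0]
    exact mul_le_mul_of_nonneg_left (pow_le_pow_left₀ (hupos x).le (hule x) 2) hG.le
  have hpeakval : G * u 0 ^ 2 = ρ₀ := by rw [hu0] ; exact hu₀sq
  exact ⟨u, c, hφX, hφC, heq1, heq2, hueven, hceven, ⟨u₀, hXbd⟩,
    ⟨(A*u₀+G*u₀^3)/|γ|, hCbd⟩, hXtop, hXbot, hCtop, hCbot, 0, hpeak, hpeakval⟩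

open Filter

/-- Band 2.2: existence of bright solitons for `g < 0` and `ω > max(ωX, ωC)`,
`0 < ϖX·ϖC < γ²`: even bounded envelopes vanishing at the far field, with the
stated attained peak value of `|g|·φX²`. -/
theorem bright_soliton_band_2_2
    (ω ωX ωC γ g : ℝ) (hγ : γ ≠ 0) (hg : g < 0)
    (hω : ω > max ωX ωC)
    (hband₁ : 0 < (ω - ωX) * (ω - ωC)) (hband₂ : (ω - ωX) * (ω - ωC) < γ ^ 2) :
    ∃ φX φC : ℝ → ℝ,
      ContDiff ℝ 1 φX ∧ ContDiff ℝ 2 φC ∧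
      (∀ x : ℝ, (g * φX x ^ 2 - (ω - ωX)) * φX x + γ * φC x = 0) ∧
      (∀ x : ℝ, -(1/2) * deriv (deriv φC) x - (ω - ωC) * φC x + γ * φX x = 0) ∧
      (∀ x : ℝ, φX (-x) = φX x) ∧ (∀ x : ℝ, φC (-x) = φC x) ∧
      (∃ M : ℝ, ∀ x : ℝ, |φX x| ≤ M) ∧ (∃ M : ℝ, ∀ x : ℝ, |φC x| ≤ M) ∧
      Tendsto φX atTop (nhds 0) ∧ Tendsto φX atBot (nhds 0) ∧
      Tendsto φC atTop (nhds 0) ∧ Tendsto φC atBot (nhds 0) ∧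
      (∃ x₀ : ℝ, (∀ x : ℝ, |g| * φX x ^ 2 ≤ |g| * φX x₀ ^ 2) ∧
        |g| * φX x₀ ^ 2 = -(ω - ωX) + (γ ^ 2 / (ω - ωC)) *
          (3/4 + Real.sqrt (9/16 - (ω - ωX) * (ω - ωC) / (2 * γ ^ 2)))) := by
  obtain ⟨hXlt, hClt⟩ := max_lt_iff.mp hω
  have hA : 0 < ω - ωX := sub_pos.mpr hXlt
  have hB : 0 < ω - ωC := sub_pos.mpr hClt
  have hG : 0 < -g := neg_pos.mpr hg
  have hγ2 : 0 < γ^2 := by positivity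
  set A := ω - ωX with hAdef
  set B := ω - ωC with hBdef
  have hD : 0 < γ^2 - A*B := by linarith
  have hEarg : 0 ≤ γ^2*(9*γ^2-8*(A*B)) := by nlinarith
  set E := Real.sqrt (γ^2*(9*γ^2-8*(A*B))) with hEdef
  have hE2 : E^2 = γ^2*(9*γ^2-8*(A*B)) := Real.sq_sqrt hEarg
  have hEpos : 0 < E := Real.sqrt_pos.mpr (by nlinarith)
  have hgap : (3*(γ^2-A*B)-A*B)^2 < E^2 := by rw [hE2] ; nlinarith
  set ρ₀ := (3*(γ^2-A*B)-A*B+E)/(4*B) with hρdef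
  set lam := (E-(3*(γ^2-A*B)-A*B))/(4*B) with hlamdef
  have hρ : 0 < ρ₀ := by
    apply div_pos _ (by linarith)
    nlinarith [abs_nonneg (3*(γ^2-A*B)-A*B)]
  have hlam : 0 < lam := by
    apply div_pos _ (by linarith)
    nlinarith
  have h3 : B*ρ₀*lam = (γ^2 - A*B)*A := by
    rw [hρdef, hlamdef]
    field_simp
    linear_combination hE2
  have h4 : 2*B*(ρ₀-lam) = 3*(γ^2 - A*B)-A*B := by
    rw [hρdef, hlamdef]
    field_simp
    ring
  set u₀ := Real.sqrt (ρ₀/(-g)) with hu₀def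
  have hu₀pos : 0 < u₀ := Real.sqrt_pos.mpr (div_pos hρ hG)
  have hu₀sq : (-g)*u₀^2 = ρ₀ := by
    rw [hu₀def, Real.sq_sqrt (div_pos hρ hG).le]
    field_simp [hg.ne]
  set a := Real.sqrt u₀ with hadef
  have ha : 0 < a := Real.sqrt_pos.mpr hu₀pos
  have ha2 : a^2 = u₀ := Real.sq_sqrt hu₀pos.le
  obtain ⟨φX, φC, k1, k2, k3, k4, k5, k6, k7, k8, k9, k10, k11, k12, x₀, k13, k14⟩ :=
    bright_aux A B (-g) γ ρ₀ lam u₀ a hA hB hG hγ hρ hlam h3 h4 hu₀sq hu₀pos ha2 ha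
  refine ⟨φX, φC, k1, k2, ?_, k4, k5, k6, k7, k8, k9, k10, k11, k12, x₀, ?_, ?_⟩
  · intro x
    have h := k3 x
    rw [neg_neg] at h
    exact h
  · intro x
    rw [abs_of_neg hg]
    exact k13 x
  · rw [abs_of_neg hg, k14]
    have hsq : Real.sqrt (9/16 - A*B/(2*γ^2)) = E/(4*γ^2) := by
      have harg : 9/16 - A*B/(2*γ^2) = (E/(4*γ^2))^2 := by
        rw [div_pow, hE2]
        field_simp
        ring
      rw [harg, Real.sqrt_sq (by positivity)]
    rw [hsq, hρdef]
    field_simp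
    ring
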